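/- Let d ≥ 2, let S ⊆ ℝ be a nonempty open interval, and let φ : S → (0,∞) be such that φ(t)² is a polynomial in t of degree at most 2. Let w ≥ 0 be a weight on S, positive almost everywhere, with all moments ∫_S |t|^k φ(t)^{d−1} w(t) dt finite. Suppose: (1) ξ_1,…,ξ_N ∈ S^{d−1} and μ_1,…,μ_N > 0 satisfy ∫_{S^{d−1}} g(ξ) dσ(ξ) = Σ_{k=1}^N μ_k g(ξ_k) for every polynomial g of degree at most 2n−1 on ℝ^d; (2) t_1,…,t_n ∈ S are the zeros of the orthogonal polynomial of degree n with respect to the weight φ(t)^{d−1} w(t) on S, and ν_1,…,ν_n are the Gauss quadrature weights, so that ∫_S g(t) φ(t)^{d−1} w(t) dt = Σ_{j=1}^n ν_j g(t_j) for every polynomial g of one variable of degree at most 2n−1. Then for every polynomial f of total degree at most 2n−1 in d+1 variables, ∫_S φ(t)^{d−1} (∫_{S^{d−1}} f(φ(t)ξ, t) dσ(ξ)) w(t) dt = Σ_{j=1}^n Σ_{k=1}^N ν_j μ_k f(φ(t_j) ξ_k, t_j). -/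

import Mathlib

open MeasureTheory MvPolynomial

noncomputable section

open Metric in
lemma map_neg_toSphere {E : Type*} [NormedAddCommGroup E] [NormedSpace ℝ E]
    [MeasurableSpace E] [BorelSpace E] (μ : Measure E) [μ.IsNegInvariant] :
    Measure.map (fun ζ : sphere (0:E) 1 => -ζ) μ.toSphere = μ.toSphere := by
  open scoped Pointwise in
  have hcont : Continuous (fun ζ : sphere (0:E) 1 => -ζ) :=
    Continuous.subtype_mk (continuous_neg.comp continuous_subtype_val) _
  ext s hs
  rw [Measure.map_apply hcont.measurable hs]
  have hs' : MeasurableSet ((fun ζ : sphere (0:E) 1 => -ζ) ⁻¹' s) :=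
    hcont.measurable hs
  rw [Measure.toSphere_apply' _ hs', Measure.toSphere_apply' _ hs]
  congr 1
  have himg : (Subtype.val '' ((fun ζ : sphere (0:E) 1 => -ζ) ⁻¹' s)) =
      -(Subtype.val '' s) := by
    ext x
    constructor
    · rintro ⟨ζ, hζ, rfl⟩
      exact ⟨-ζ, hζ, by simp⟩
    · rintro ⟨ζ, hζ, hx⟩
      exact ⟨-ζ, by simpa using hζ, by simp [hx]⟩
  rw [himg]
  have hsmul : Set.Ioo (0:ℝ) 1 • (-(Subtype.val '' s)) =
      -(Set.Ioo (0:ℝ) 1 • (Subtype.val '' s)) := by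
    ext x
    simp only [Set.mem_smul, Set.mem_neg]
    constructor
    · rintro ⟨a, ha, y, hy, rfl⟩
      exact ⟨a, ha, -y, hy, by simp⟩
    · rintro ⟨a, ha, y, hy, hx⟩
      exact ⟨a, ha, -y, by simpa using hy, by rw [smul_neg, hx, neg_neg]⟩
  rw [hsmul, Measure.measure_neg]

open Metric in
lemma odd_integral_zero (d : ℕ) (β : Fin d → ℕ) (hodd : Odd (∑ i, β i)) :
    ∫ ζ : sphere (0 : EuclideanSpace ℝ (Fin d)) 1,
      (∏ i, (ζ : EuclideanSpace ℝ (Fin d)) i ^ β i)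
      ∂((volume : Measure (EuclideanSpace ℝ (Fin d))).toSphere) = 0 := by
  set F : sphere (0 : EuclideanSpace ℝ (Fin d)) 1 → ℝ :=
    fun ζ => ∏ i, (ζ : EuclideanSpace ℝ (Fin d)) i ^ β i with hF
  have hcontF : Continuous F := by
    apply continuous_finset_prod
    intro i _
    exact ((PiLp.continuous_apply 2 _ i).comp continuous_subtype_val).pow _
  have hneg : ∀ ζ, F (-ζ) = -F ζ := by
    intro ζ
    have h1 : F (-ζ) = ∏ i, ((-1 : ℝ) * (ζ : EuclideanSpace ℝ (Fin d)) i) ^ β i := by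
      simp [hF]
    rw [h1]
    simp only [mul_pow]
    rw [Finset.prod_mul_distrib, Finset.prod_pow_eq_pow_sum, hodd.neg_one_pow, hF]
    ring
  have hmp : ∫ ζ, F ζ ∂((volume : Measure (EuclideanSpace ℝ (Fin d))).toSphere)
      = ∫ ζ, F (-ζ) ∂((volume : Measure (EuclideanSpace ℝ (Fin d))).toSphere) := by
    conv_lhs => rw [← map_neg_toSphere (volume : Measure (EuclideanSpace ℝ (Fin d)))]
    rw [integral_map]
    · exact (Continuous.subtype_mk (continuous_neg.comp continuous_subtype_val) _).measurable.aemeasurable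
    · exact hcontF.aestronglyMeasurable
  simp only [hneg, integral_neg] at hmp
  linarith

lemma eval_snoc (d : ℕ) (f : MvPolynomial (Fin (d+1)) ℝ) (r t : ℝ)
    (x : EuclideanSpace ℝ (Fin d)) :
    MvPolynomial.eval (Fin.snoc (r • x) t) f =
      ∑ α ∈ f.support,
        (MvPolynomial.coeff α f * r ^ (∑ i : Fin d, α (Fin.castSucc i)) *
            t ^ (α (Fin.last d))) *
          ∏ i : Fin d, x i ^ α (Fin.castSucc i) := by
  conv_lhs => rw [f.as_sum]
  rw [_root_.map_sum]
  apply Finset.sum_congr rfl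
  intro α _
  rw [MvPolynomial.eval_monomial]
  rw [Finsupp.prod_fintype _ _ (fun i => pow_zero _)]
  rw [Fin.prod_univ_castSucc]
  simp only [Fin.snoc_castSucc, Fin.snoc_last, PiLp.smul_apply, smul_eq_mul, mul_pow]
  rw [Finset.prod_mul_distrib, Finset.prod_pow_eq_pow_sum]
  ring


/-- The surface measure `dσ` on the unit sphere `S^{d−1} ⊆ ℝ^d`. -/
def sphMeas (d : ℕ) : Measure (Metric.sphere (0 : EuclideanSpace ℝ (Fin d)) 1) :=
  (volume : Measure (EuclideanSpace ℝ (Fin d))).toSphere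

/-- Product cubature rule of degree `2n−1` on a quadratic surface of
revolution, obtained from a cubature rule of degree `2n−1` on the unit sphere and the
Gauss quadrature of the weight `φ(t)^{d−1} w(t)` on `S`. -/
theorem surface_cubature
    (d n : ℕ) (hd : 2 ≤ d) (hn : 0 < n)
    (Sset : Set ℝ) (hSopen : IsOpen Sset) (hSne : Sset.Nonempty)
    (hSconn : Sset.OrdConnected)
    (φ : ℝ → ℝ) (hφpos : ∀ t ∈ Sset, 0 < φ t)
    (c2 c1 c0 : ℝ) (hφsq : ∀ t ∈ Sset, φ t ^ 2 = c2 * t ^ 2 + c1 * t + c0)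
    (w : ℝ → ℝ) (hw0 : ∀ t ∈ Sset, 0 ≤ w t)
    (hwpos : ∀ᵐ t ∂(volume.restrict Sset), 0 < w t)
    (hmom : ∀ k : ℕ, IntegrableOn (fun t => |t| ^ k * (φ t) ^ (d - 1) * w t) Sset)
    -- a cubature rule of degree `2n−1` on the unit sphere
    (N : ℕ) (ξ : Fin N → Metric.sphere (0 : EuclideanSpace ℝ (Fin d)) 1)
    (μw : Fin N → ℝ) (hμpos : ∀ k, 0 < μw k)
    (hsph : ∀ g : MvPolynomial (Fin d) ℝ, g.totalDegree ≤ 2 * n - 1 →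
      ∫ ζ : Metric.sphere (0 : EuclideanSpace ℝ (Fin d)) 1,
          MvPolynomial.eval (ζ : EuclideanSpace ℝ (Fin d)) g ∂(sphMeas d) =
        ∑ k, μw k * MvPolynomial.eval (ξ k : EuclideanSpace ℝ (Fin d)) g)
    -- the Gauss quadrature of degree `2n−1` for `φ(t)^{d−1} w(t)` on `S`:
    -- nodes are the zeros of the orthogonal polynomial `p` of degree `n`
    (p : Polynomial ℝ) (hpdeg : p.degree = n)
    (hporth : ∀ k < n, ∫ t in Sset, p.eval t * t ^ k * (φ t) ^ (d - 1) * w t = 0)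
    (tj : Fin n → ℝ) (htS : ∀ j, tj j ∈ Sset) (htz : ∀ j, p.eval (tj j) = 0)
    (htinj : Function.Injective tj)
    (ν : Fin n → ℝ)
    (hgauss : ∀ g : Polynomial ℝ, g.degree ≤ (2 * n - 1 : ℕ) →
      ∫ t in Sset, g.eval t * (φ t) ^ (d - 1) * w t = ∑ j, ν j * g.eval (tj j)) :
    -- the product rule is a cubature rule of degree `2n−1` on the surface
    ∀ f : MvPolynomial (Fin (d + 1)) ℝ, f.totalDegree ≤ 2 * n - 1 →
      ∫ t in Sset, (φ t) ^ (d - 1) *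
          (∫ ζ : Metric.sphere (0 : EuclideanSpace ℝ (Fin d)) 1,
            MvPolynomial.eval
              (Fin.snoc (φ t • (ζ : EuclideanSpace ℝ (Fin d))) t) f ∂(sphMeas d)) *
          w t =
        ∑ j, ∑ k, ν j * μw k *
          MvPolynomial.eval
            (Fin.snoc (φ (tj j) • (ξ k : EuclideanSpace ℝ (Fin d))) (tj j)) f := by
  intro f hf
  haveI : MeasureTheory.IsFiniteMeasure (sphMeas d) :=
    inferInstanceAs (MeasureTheory.IsFiniteMeasure
      (volume : Measure (EuclideanSpace ℝ (Fin d))).toSphere)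
  set Bs : (Fin (d+1) →₀ ℕ) → ℕ := fun α => ∑ i : Fin d, α (Fin.castSucc i) with hBs
  set ms : (Fin (d+1) →₀ ℕ) → ℕ := fun α => α (Fin.last d) with hms
  have hdegα : ∀ α ∈ f.support, Bs α + ms α ≤ 2 * n - 1 := by
    intro α hα
    have h1 : (α.sum fun _ e => e) ≤ f.totalDegree := MvPolynomial.le_totalDegree hα
    have h2 : (α.sum fun _ e => e) = Bs α + ms α := by
      rw [Finsupp.sum_fintype _ _ (fun _ => rfl), Fin.sum_univ_castSucc]
    omega
  set I : (Fin (d+1) →₀ ℕ) → ℝ := fun α =>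
    ∫ ζ : Metric.sphere (0 : EuclideanSpace ℝ (Fin d)) 1,
      ∏ i : Fin d, ((ζ : EuclideanSpace ℝ (Fin d)) i) ^ α (Fin.castSucc i)
      ∂(sphMeas d) with hIdef
  have hI : ∀ α ∈ f.support, I α =
      ∑ k, μw k * ∏ i : Fin d, ((ξ k : EuclideanSpace ℝ (Fin d)) i) ^ α (Fin.castSucc i) := by
    intro α hα
    have hdeg : (∏ i : Fin d,
        (MvPolynomial.X i : MvPolynomial (Fin d) ℝ) ^ α (Fin.castSucc i)).totalDegree
        ≤ 2 * n - 1 := by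
      refine le_trans (MvPolynomial.totalDegree_finset_prod _ _) ?_
      refine le_trans (Finset.sum_le_sum fun i _ =>
        le_of_eq (MvPolynomial.totalDegree_X_pow _ _)) ?_
      exact le_trans (by omega : Bs α ≤ Bs α + ms α) (hdegα α hα)
    have := hsph _ hdeg
    simpa only [map_prod, map_pow, MvPolynomial.eval_X] using this
  have hIodd : ∀ α, Odd (Bs α) → I α = 0 := by
    intro α h
    exact odd_integral_zero d (fun i => α (Fin.castSucc i)) h
  set q : Polynomial ℝ := Polynomial.C c2 * Polynomial.X ^ 2 +
    Polynomial.C c1 * Polynomial.X + Polynomial.C c0 with hqdef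
  have hq : ∀ t ∈ Sset, q.eval t = φ t ^ 2 := by
    intro t ht
    simp only [hqdef, Polynomial.eval_add, Polynomial.eval_mul, Polynomial.eval_C,
      Polynomial.eval_pow, Polynomial.eval_X]
    exact (hφsq t ht).symm
  set G : Polynomial ℝ := ∑ α ∈ f.support,
    Polynomial.C (MvPolynomial.coeff α f * I α) * q ^ (Bs α / 2) *
      Polynomial.X ^ (ms α) with hGdef
  have hterm : ∀ α ∈ f.support, ∀ t ∈ Sset,
      (MvPolynomial.coeff α f * φ t ^ (Bs α) * t ^ (ms α)) * I α =
      (Polynomial.C (MvPolynomial.coeff α f * I α) * q ^ (Bs α / 2) *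
        Polynomial.X ^ (ms α)).eval t := by
    intro α hα t ht
    simp only [Polynomial.eval_mul, Polynomial.eval_C, Polynomial.eval_pow, Polynomial.eval_X]
    rcases Nat.even_or_odd (Bs α) with he | ho
    · obtain ⟨r, hr⟩ := he
      have hdiv : Bs α / 2 = r := by omega
      have hpow : φ t ^ (Bs α) = (q.eval t) ^ r := by
        rw [show Bs α = 2 * r by omega, pow_mul, hq t ht]
      rw [hpow, hdiv]; ring
    · rw [hIodd α ho]; ring
  have hGdeg : G.degree ≤ (2 * n - 1 : ℕ) := by
    refine le_trans (Polynomial.degree_sum_le _ _) (Finset.sup_le fun α hα => ?_)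
    apply Polynomial.degree_le_of_natDegree_le
    have h1 : (Polynomial.C (MvPolynomial.coeff α f * I α) * q ^ (Bs α / 2) *
        Polynomial.X ^ (ms α)).natDegree ≤
        (Polynomial.C (MvPolynomial.coeff α f * I α) * q ^ (Bs α / 2)).natDegree +
          (Polynomial.X ^ (ms α) : Polynomial ℝ).natDegree :=
      Polynomial.natDegree_mul_le
    have h2 : (Polynomial.C (MvPolynomial.coeff α f * I α) * q ^ (Bs α / 2)).natDegree ≤
        (Polynomial.C (MvPolynomial.coeff α f * I α)).natDegree +
          (q ^ (Bs α / 2)).natDegree := Polynomial.natDegree_mul_le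
    have h3 : (q ^ (Bs α / 2)).natDegree ≤ (Bs α / 2) * q.natDegree :=
      Polynomial.natDegree_pow_le
    have h4 : q.natDegree ≤ 2 := Polynomial.natDegree_quadratic_le
    have h5 : (Polynomial.X ^ (ms α) : Polynomial ℝ).natDegree = ms α :=
      Polynomial.natDegree_X_pow _
    have h6 : (Polynomial.C (MvPolynomial.coeff α f * I α)).natDegree = 0 :=
      Polynomial.natDegree_C _
    have h7 := hdegα α hα
    have h8 : Bs α / 2 * 2 ≤ Bs α := Nat.div_mul_le_self _ _
    have h9 : Bs α / 2 * q.natDegree ≤ Bs α / 2 * 2 := Nat.mul_le_mul_left _ h4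
    omega
  have claim1 : ∀ t ∈ Sset,
      (∫ ζ : Metric.sphere (0 : EuclideanSpace ℝ (Fin d)) 1,
        MvPolynomial.eval (Fin.snoc (φ t • (ζ : EuclideanSpace ℝ (Fin d))) t) f
        ∂(sphMeas d)) = G.eval t := by
    intro t ht
    have hstep : ∀ ζ : Metric.sphere (0 : EuclideanSpace ℝ (Fin d)) 1,
        MvPolynomial.eval (Fin.snoc (φ t • (ζ : EuclideanSpace ℝ (Fin d))) t) f =
        ∑ α ∈ f.support,
          (MvPolynomial.coeff α f * φ t ^ (Bs α) * t ^ (ms α)) *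
            ∏ i : Fin d, ((ζ : EuclideanSpace ℝ (Fin d)) i) ^ α (Fin.castSucc i) := by
      intro ζ
      exact eval_snoc d f (φ t) t _
    simp only [hstep]
    rw [integral_finset_sum]
    · rw [hGdef, Polynomial.eval_finset_sum]
      apply Finset.sum_congr rfl
      intro α hα
      rw [MeasureTheory.integral_const_mul]
      exact hterm α hα t ht
    · intro α _
      have hcont : Continuous (fun ζ : Metric.sphere (0 : EuclideanSpace ℝ (Fin d)) 1 =>
          (MvPolynomial.coeff α f * φ t ^ (Bs α) * t ^ (ms α)) *
            ∏ i : Fin d, ((ζ : EuclideanSpace ℝ (Fin d)) i) ^ α (Fin.castSucc i)) := by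
        apply continuous_const.mul
        apply continuous_finset_prod
        intro i _
        exact ((PiLp.continuous_apply 2 _ i).comp continuous_subtype_val).pow _
      exact integrableOn_univ.mp (hcont.continuousOn.integrableOn_compact isCompact_univ)
  have claim2 : ∀ s ∈ Sset,
      (∑ k, μw k *
        MvPolynomial.eval (Fin.snoc (φ s • (ξ k : EuclideanSpace ℝ (Fin d))) s) f)
      = G.eval s := by
    intro s hs
    have hstep : ∀ k, MvPolynomial.eval
        (Fin.snoc (φ s • (ξ k : EuclideanSpace ℝ (Fin d))) s) f =
        ∑ α ∈ f.support,
          (MvPolynomial.coeff α f * φ s ^ (Bs α) * s ^ (ms α)) *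
            ∏ i : Fin d, ((ξ k : EuclideanSpace ℝ (Fin d)) i) ^ α (Fin.castSucc i) := by
      intro k
      exact eval_snoc d f (φ s) s _
    simp only [hstep, Finset.mul_sum]
    rw [Finset.sum_comm]
    rw [hGdef, Polynomial.eval_finset_sum]
    apply Finset.sum_congr rfl
    intro α hα
    rw [← hterm α hα s hs, hI α hα, Finset.mul_sum]
    exact Finset.sum_congr rfl fun k _ => by ring
  have hLHS : ∫ t in Sset, (φ t) ^ (d - 1) *
      (∫ ζ : Metric.sphere (0 : EuclideanSpace ℝ (Fin d)) 1,
        MvPolynomial.eval (Fin.snoc (φ t • (ζ : EuclideanSpace ℝ (Fin d))) t) f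
        ∂(sphMeas d)) * w t =
      ∫ t in Sset, G.eval t * (φ t) ^ (d - 1) * w t := by
    apply MeasureTheory.setIntegral_congr_fun hSopen.measurableSet
    intro t ht
    dsimp only
    rw [claim1 t ht]
    ring
  rw [hLHS, hgauss G hGdeg]
  apply Finset.sum_congr rfl
  intro j _
  rw [← claim2 (tj j) (htS j), Finset.mul_sum]
  apply Finset.sum_congr rfl
  intro k _
  ring
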